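/- The $n$-th Hermite function is an eigenfunction of the Fourier transform with eigenvalue $(-i)^n$: $\widehat{h_n} = (-i)^n h_n$. -/

import Mathlib

open MeasureTheory Real Filter Asymptotics

noncomputable def FT (f : ℝ → ℂ) (ξ : ℝ) : ℂ :=
  (((2 * Real.pi) ^ (-(1:ℝ)/2) : ℝ) : ℂ) * ∫ x : ℝ, f x * Complex.exp (-(Complex.I * ξ * x))

noncomputable def hermiteFn (n : ℕ) (x : ℝ) : ℝ :=
  ((2 ^ n * n.factorial * Real.sqrt Real.pi : ℝ) ^ (-(1:ℝ)/2)) *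
    ((-1 : ℝ) ^ n * Real.exp (x ^ 2) * iteratedDeriv n (fun t => Real.exp (-t ^ 2)) x) *
    Real.exp (-x ^ 2 / 2)

def IsWeight (ω : ℝ → ℝ) : Prop :=
  Continuous ω ∧ Monotone ω ∧ (∀ x, 0 ≤ ω x) ∧
  ConvexOn ℝ Set.univ (fun t => ω (Real.exp t)) ∧
  ((fun t => Real.log t) =o[atTop] ω) ∧
  (∃ C : ℝ, ∀ᶠ t in atTop, ω (2 * t) ≤ C * ω t) ∧
  Filter.limsup (fun t => ω t / t ^ 2) atTop ≤ 1 / 2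

noncomputable def omegaNorm (ω : ℝ → ℝ) (f : ℝ → ℂ) : ℝ :=
  (⨆ x : ℝ, ‖f x‖ * Real.exp (ω |x|)) + (⨆ ξ : ℝ, ‖FT f ξ‖ * Real.exp (ω |ξ|))

def MemSomega (ω : ℝ → ℝ) (f : ℝ → ℂ) : Prop :=
  MemLp f 2 volume ∧
  (∃ C : ℝ, ∀ x, ‖f x‖ ≤ C * Real.exp (-ω |x|)) ∧
  (∃ C : ℝ, ∀ ξ, ‖FT f ξ‖ ≤ C * Real.exp (-ω |ξ|))

noncomputable def OmegaStar (ω : ℝ → ℝ) (ν : ℝ) : ℝ :=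
  ⨆ t : ℝ, ν * t - ω (Real.exp t)

noncomputable def wigner (f : ℝ → ℂ) (q p : ℝ) : ℂ :=
  ((1 / (2 * Real.pi) : ℝ) : ℂ) * ∫ x : ℝ,
    Complex.exp (Complex.I * p * x) * f (q - x / 2) * (starRingEnd ℂ) (f (q + x / 2))

noncomputable def laguerre (n α : ℕ) (x : ℝ) : ℝ :=
  (n.factorial : ℝ)⁻¹ * Real.exp x * x ^ (-(α : ℤ)) *
    iteratedDeriv n (fun t => Real.exp (-t) * t ^ (n + α)) x

noncomputable def specialHermite (m n : ℕ) (q p : ℝ) : ℂ :=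
  ((1 / (2 * Real.pi) : ℝ) : ℂ) * ∫ x : ℝ,
    Complex.exp (Complex.I * p * x) * (hermiteFn m (q - x / 2) : ℂ) * (hermiteFn n (q + x / 2) : ℂ)

noncomputable def lmn (m n : ℕ) (r : ℝ) : ℝ :=
  (2 : ℝ) ^ (((m : ℝ) - n) / 2) / Real.pi * Real.sqrt ((n.factorial : ℝ) / m.factorial) *
    Real.exp (-r ^ 2) * r ^ (m - n) * |laguerre n (m - n) (2 * r ^ 2)|

namespace HermiteFTAux

open Polynomial MeasureTheory FourierTransform Complex

noncomputable def PH : ℕ → Polynomial ℝ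
  | 0 => 1
  | n + 1 => Polynomial.C 2 * Polynomial.X * PH n - Polynomial.derivative (PH n)

lemma hasDerivAt_gauss (x : ℝ) :
    HasDerivAt (fun t : ℝ => Real.exp (-t ^ 2)) (-(2 * x) * Real.exp (-x ^ 2)) x := by
  have h : HasDerivAt (fun t : ℝ => -t ^ 2) (-(2 * x)) x := by
    simpa using (hasDerivAt_pow 2 x).fun_neg
  convert h.exp using 1; ring

lemma hasDerivAt_gaussHalf (x : ℝ) :
    HasDerivAt (fun t : ℝ => Real.exp (-t ^ 2 / 2)) (-x * Real.exp (-x ^ 2 / 2)) x := by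
  have h : HasDerivAt (fun t : ℝ => -t ^ 2 / 2) (-x) x := by
    have := ((hasDerivAt_pow 2 x).neg.div_const 2)
    refine this.congr_deriv ?_
    norm_num
    ring
  convert h.exp using 1; ring

lemma iteratedDeriv_gauss (n : ℕ) (x : ℝ) :
    iteratedDeriv n (fun t => Real.exp (-t ^ 2)) x
      = (-1 : ℝ) ^ n * (PH n).eval x * Real.exp (-x ^ 2) := by
  induction n generalizing x with
  | zero => simp [PH]
  | succ n ih =>
    rw [iteratedDeriv_succ]
    have hfe : iteratedDeriv n (fun t => Real.exp (-t ^ 2))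
        = fun y => (-1 : ℝ) ^ n * ((PH n).eval y * Real.exp (-y ^ 2)) := by
      funext y; rw [ih]; ring
    rw [hfe]
    have hd : HasDerivAt (fun y => (PH n).eval y * Real.exp (-y ^ 2))
        ((PH n).derivative.eval x * Real.exp (-x ^ 2)
          + (PH n).eval x * (-(2 * x) * Real.exp (-x ^ 2))) x :=
      ((PH n).hasDerivAt x).mul (hasDerivAt_gauss x)
    rw [deriv_const_mul _ hd.differentiableAt, hd.deriv]
    simp only [PH, eval_sub, eval_mul, eval_C, eval_X, pow_succ]
    ring

noncomputable def cst (n : ℕ) : ℝ :=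
  ((2 ^ n * n.factorial * Real.sqrt Real.pi : ℝ) ^ (-(1:ℝ)/2))

lemma cst_succ (n : ℕ) : cst n = Real.sqrt (2 * ((n : ℝ) + 1)) * cst (n + 1) := by
  have h0 : (0:ℝ) < Real.sqrt Real.pi := Real.sqrt_pos.2 Real.pi_pos
  have hfact : (0:ℝ) < (n.factorial : ℝ) := by exact_mod_cast n.factorial_pos
  have hb : (0:ℝ) < 2 ^ n * n.factorial * Real.sqrt Real.pi := by positivity
  have h2 : ((2:ℝ) ^ (n+1) * ((n+1).factorial : ℝ) * Real.sqrt Real.pi)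
      = (2 * ((n:ℝ)+1)) * (2 ^ n * (n.factorial : ℝ) * Real.sqrt Real.pi) := by
    push_cast [Nat.factorial_succ]; ring
  have key : Real.sqrt (2 * ((n:ℝ)+1)) * ((2 * ((n:ℝ)+1)) ^ (-(1:ℝ)/2)) = 1 := by
    rw [Real.sqrt_eq_rpow, ← Real.rpow_add (by positivity)]
    norm_num
  unfold cst
  rw [h2, Real.mul_rpow (by positivity) hb.le, ← mul_assoc, key, one_mul]

lemma hermiteFn_eq (n : ℕ) (x : ℝ) :
    hermiteFn n x = cst n * ((PH n).eval x * Real.exp (-x ^ 2 / 2)) := by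
  rw [hermiteFn, iteratedDeriv_gauss]
  have h1 : Real.exp (x ^ 2) * Real.exp (-x ^ 2) = 1 := by rw [← Real.exp_add]; simp
  have h2 : ((-1:ℝ)) ^ n * (-1 : ℝ) ^ n = 1 := by rw [← mul_pow]; norm_num
  unfold cst
  linear_combination (2 ^ n * (n.factorial:ℝ) * Real.sqrt Real.pi) ^ (-(1:ℝ)/2)
      * Real.exp (-x^2/2) * (PH n).eval x *
      (Real.exp (x^2) * Real.exp (-x^2) * h2 + h1)

end HermiteFTAux
namespace HermiteFTAux
open Polynomial MeasureTheory FourierTransform Complex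

lemma abs_le_one_add_sq (x : ℝ) : |x| ≤ 1 + x ^ 2 / 4 := by
  nlinarith [sq_nonneg (|x| - 2), _root_.sq_abs x, abs_nonneg x]

lemma pow_le_factorial_mul_exp (x : ℝ) (n : ℕ) : |x| ^ n ≤ n.factorial * Real.exp |x| := by
  have h := Real.sum_le_exp_of_nonneg (abs_nonneg x) (n + 1)
  have h1 : |x| ^ n / n.factorial ≤ Real.exp |x| := by
    refine le_trans ?_ h
    exact Finset.single_le_sum (f := fun i => |x| ^ i / i.factorial)
      (fun i _ => by positivity) (Finset.self_mem_range_succ n)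
  have hf : (0:ℝ) < n.factorial := by exact_mod_cast n.factorial_pos
  calc |x| ^ n = (|x| ^ n / n.factorial) * n.factorial := by field_simp
  _ ≤ Real.exp |x| * n.factorial := by gcongr
  _ = n.factorial * Real.exp |x| := mul_comm _ _

lemma integrable_monomial_gauss (n : ℕ) :
    Integrable (fun x : ℝ => x ^ n * Real.exp (-x ^ 2 / 2)) := by
  have hg : Integrable (fun x : ℝ => (n.factorial * Real.exp 1) * Real.exp (-(4⁻¹:ℝ) * x ^ 2)) :=
    (integrable_exp_neg_mul_sq (by norm_num)).const_mul _
  refine hg.mono' ?_ ?_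
  · exact ((continuous_pow n).mul (Real.continuous_exp.comp (by fun_prop))).aestronglyMeasurable
  · refine Filter.Eventually.of_forall fun x => ?_
    have h1 : |x| ^ n ≤ n.factorial * Real.exp |x| := pow_le_factorial_mul_exp x n
    have h2 : Real.exp (|x| + -x ^ 2 / 2) ≤ Real.exp (1 + -(4⁻¹:ℝ) * x ^ 2) := by
      apply Real.exp_le_exp.2
      have := abs_le_one_add_sq x
      nlinarith
    have hexp : (0:ℝ) < Real.exp (-x ^ 2 / 2) := Real.exp_pos _
    calc ‖x ^ n * Real.exp (-x ^ 2 / 2)‖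
        = |x| ^ n * Real.exp (-x ^ 2 / 2) := by
          rw [Real.norm_eq_abs, abs_mul, _root_.abs_pow, Real.abs_exp]
      _ ≤ (n.factorial * Real.exp |x|) * Real.exp (-x ^ 2 / 2) := by gcongr
      _ = n.factorial * Real.exp (|x| + -x ^ 2 / 2) := by rw [Real.exp_add]; ring
      _ ≤ n.factorial * Real.exp (1 + -(4⁻¹:ℝ) * x ^ 2) := by
          exact mul_le_mul_of_nonneg_left h2 (Nat.cast_nonneg _)
      _ = n.factorial * Real.exp 1 * Real.exp (-(4⁻¹:ℝ) * x ^ 2) := by rw [Real.exp_add]; ring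

lemma integrable_poly_gauss (p : Polynomial ℝ) :
    Integrable (fun x : ℝ => p.eval x * Real.exp (-x ^ 2 / 2)) := by
  induction p using Polynomial.induction_on' with
  | add p q hp hq =>
    simp only [eval_add, add_mul]; exact hp.add hq
  | monomial m a =>
      simpa [Polynomial.eval_monomial, mul_assoc] using (integrable_monomial_gauss m).const_mul a

lemma norm_char (ξ x : ℝ) : ‖Complex.exp (-(Complex.I * ξ * x))‖ = 1 := by
  rw [Complex.norm_exp]
  simp

lemma integrable_char_mul (f : ℝ → ℂ) (hf : Integrable f) (ξ : ℝ) :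
    Integrable (fun x : ℝ => f x * Complex.exp (-(Complex.I * ξ * x))) := by
  have h : Integrable (fun x : ℝ => Complex.exp (-(Complex.I * ξ * x)) * f x) :=
    hf.bdd_mul ((Complex.continuous_exp.comp (by fun_prop)).aestronglyMeasurable)
      (ae_of_all _ fun x => le_of_eq (norm_char ξ x))
  exact h.congr (Filter.Eventually.of_forall fun x => mul_comm _ _)

lemma FT_eq_fourierIntegral (f : ℝ → ℂ) (ξ : ℝ) :
    FT f ξ = (((2 * Real.pi) ^ (-(1:ℝ)/2) : ℝ) : ℂ) * (𝓕 f (ξ / (2 * Real.pi))) := by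
  rw [FT, Real.fourier_real_eq_integral_exp_smul]
  congr 1
  refine integral_congr_ae (Filter.Eventually.of_forall fun x => ?_)
  simp only [smul_eq_mul]
  rw [mul_comm]
  congr 1
  have hπ : (Real.pi : ℂ) ≠ 0 := Complex.ofReal_ne_zero.2 Real.pi_ne_zero
  congr 1
  push_cast
  field_simp

lemma FT_deriv (f : ℝ → ℂ) (hf : Integrable f) (h'f : Differentiable ℝ f)
    (hf' : Integrable (deriv f)) (ξ : ℝ) :
    FT (deriv f) ξ = Complex.I * ξ * FT f ξ := by
  have hπ : (Real.pi : ℂ) ≠ 0 := Complex.ofReal_ne_zero.2 Real.pi_ne_zero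
  rw [FT_eq_fourierIntegral, FT_eq_fourierIntegral, Real.fourier_deriv hf h'f hf']
  simp only [smul_eq_mul]
  push_cast
  field_simp

lemma fourierIntegral_const_mul (f : ℝ → ℂ) (c : ℂ) (w : ℝ) :
    𝓕 (fun x => c * f x) w = c * 𝓕 f w := by
  rw [Real.fourier_real_eq_integral_exp_smul,
    Real.fourier_real_eq_integral_exp_smul, ← MeasureTheory.integral_const_mul]
  refine integral_congr_ae (Filter.Eventually.of_forall fun x => ?_)
  simp only [smul_eq_mul]; ring

lemma FT_sub_smul (c : ℝ) (u v : ℝ → ℂ) (hu : Integrable u) (hv : Integrable v) (ξ : ℝ) :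
    FT (fun x => (c:ℂ) * (u x - v x)) ξ = c * (FT u ξ - FT v ξ) := by
  rw [FT, FT, FT]
  rw [show (fun x : ℝ => ((c:ℂ) * (u x - v x)) * Complex.exp (-(Complex.I*ξ*x)))
      = fun x : ℝ => (c:ℂ) * (u x * Complex.exp (-(Complex.I*ξ*x))
          - v x * Complex.exp (-(Complex.I*ξ*x))) from funext fun x => by ring]
  rw [MeasureTheory.integral_const_mul,
    integral_sub (integrable_char_mul u hu ξ) (integrable_char_mul v hv ξ)]
  ring

lemma FT_hasDerivAt (f : ℝ → ℂ) (hf : Integrable f)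
    (hf' : Integrable (fun x : ℝ => x • f x)) (ξ : ℝ) :
    HasDerivAt (FT f) (-Complex.I * FT (fun x : ℝ => x • f x) ξ) ξ := by
  have hπ : (Real.pi : ℂ) ≠ 0 := Complex.ofReal_ne_zero.2 Real.pi_ne_zero
  have h := Real.hasDerivAt_fourier hf hf' (ξ / (2 * Real.pi))
  have h2 : HasDerivAt (fun ξ : ℝ => ξ / (2 * Real.pi)) (1 / (2 * Real.pi)) ξ := by
    simpa using (hasDerivAt_id ξ).div_const (2 * Real.pi)
  have h3 := h.scomp ξ h2
  have h4 := h3.const_mul ((((2 * Real.pi) ^ (-(1:ℝ)/2) : ℝ) : ℂ))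
  have hfun : (fun y : ℝ => (((2 * Real.pi) ^ (-(1:ℝ)/2) : ℝ) : ℂ)
      * (𝓕 f ∘ fun ξ : ℝ => ξ / (2 * Real.pi)) y) = FT f := by
    funext y
    rw [Function.comp_apply]
    exact (FT_eq_fourierIntegral f y).symm
  rw [hfun] at h4
  have hG : 𝓕 (fun x : ℝ => (-2 * (Real.pi:ℂ) * Complex.I * (x:ℂ)) • f x) (ξ / (2*Real.pi))
      = (-2 * (Real.pi:ℂ) * Complex.I) * 𝓕 (fun x : ℝ => x • f x) (ξ / (2*Real.pi)) := by
    rw [← fourierIntegral_const_mul]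
    refine congrArg (fun g : ℝ → ℂ => 𝓕 g (ξ / (2*Real.pi))) ?_
    funext x
    rw [smul_eq_mul, Complex.real_smul]
    ring
  refine h4.congr_deriv ?_
  rw [hG, FT_eq_fourierIntegral]
  rw [Complex.real_smul]
  push_cast
  field_simp
end HermiteFTAux
namespace HermiteFTAux2
open Polynomial MeasureTheory FourierTransform Complex HermiteFTAux

noncomputable def dPH (n : ℕ) : Polynomial ℝ :=
  Polynomial.derivative (PH n) - Polynomial.X * PH n

lemma hasDerivAt_hermiteFn (n : ℕ) (x : ℝ) :
    HasDerivAt (fun x => hermiteFn n x)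
      (cst n * ((dPH n).eval x * Real.exp (-x ^ 2 / 2))) x := by
  have hd : HasDerivAt (fun y => (PH n).eval y * Real.exp (-y ^ 2 / 2))
      ((PH n).derivative.eval x * Real.exp (-x ^ 2 / 2)
        + (PH n).eval x * (-x * Real.exp (-x ^ 2 / 2))) x :=
    ((PH n).hasDerivAt x).mul (hasDerivAt_gaussHalf x)
  have h2 := hd.const_mul (cst n)
  have he : (fun y => cst n * ((PH n).eval y * Real.exp (-y ^ 2 / 2)))
      = fun y => hermiteFn n y := by
    funext y; exact (hermiteFn_eq n y).symm
  rw [he] at h2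
  refine h2.congr_deriv ?_
  simp only [dPH, eval_sub, eval_mul, eval_X]
  ring

lemma hasDerivAt_hermiteC (n : ℕ) (x : ℝ) :
    HasDerivAt (fun x : ℝ => (hermiteFn n x : ℂ))
      (((cst n * ((dPH n).eval x * Real.exp (-x ^ 2 / 2))) : ℝ) : ℂ) x :=
  (hasDerivAt_hermiteFn n x).ofReal_comp

lemma integrable_hermiteC (n : ℕ) : Integrable (fun x : ℝ => (hermiteFn n x : ℂ)) := by
  have h : Integrable (fun x : ℝ => hermiteFn n x) :=
    ((integrable_poly_gauss (PH n)).const_mul (cst n)).congr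
      (Filter.Eventually.of_forall fun x => (hermiteFn_eq n x).symm)
  exact h.ofReal

lemma integrable_smul_hermiteC (n : ℕ) :
    Integrable (fun x : ℝ => x • (hermiteFn n x : ℂ)) := by
  have h : Integrable (fun x : ℝ => x * hermiteFn n x) := by
    refine ((integrable_poly_gauss (Polynomial.X * PH n)).const_mul (cst n)).congr
      (Filter.Eventually.of_forall fun x => ?_)
    show cst n * (Polynomial.eval x (Polynomial.X * PH n) * Real.exp (-x ^ 2 / 2))
        = x * hermiteFn n x
    rw [hermiteFn_eq]
    simp only [Polynomial.eval_mul, Polynomial.eval_X]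
    ring
  refine h.ofReal.congr (Filter.Eventually.of_forall fun x => ?_)
  show ((x * hermiteFn n x : ℝ) : ℂ) = x • (hermiteFn n x : ℂ)
  rw [Complex.real_smul]
  push_cast
  ring

lemma integrable_derivC (n : ℕ) :
    Integrable (fun x : ℝ => (((cst n * ((dPH n).eval x * Real.exp (-x ^ 2 / 2))) : ℝ) : ℂ)) :=
  ((integrable_poly_gauss (dPH n)).const_mul (cst n)).ofReal

lemma hermite_rec (n : ℕ) (x : ℝ) :
    x * hermiteFn n x - cst n * ((dPH n).eval x * Real.exp (-x ^ 2 / 2))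
      = Real.sqrt (2 * ((n:ℝ) + 1)) * hermiteFn (n + 1) x := by
  rw [hermiteFn_eq, hermiteFn_eq, cst_succ n]
  simp only [dPH, PH, Polynomial.eval_sub, Polynomial.eval_mul, Polynomial.eval_X,
    Polynomial.eval_C]
  ring

end HermiteFTAux2

open HermiteFTAux HermiteFTAux2 in
theorem stmt3 (n : ℕ) (ξ : ℝ) :
    FT (fun x => (hermiteFn n x : ℂ)) ξ = (-Complex.I) ^ n * (hermiteFn n ξ : ℂ) := by
  induction n generalizing ξ with
  | zero =>
    have h0 : ∀ x : ℝ, hermiteFn 0 x = cst 0 * Real.exp (-x ^ 2 / 2) := by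
      intro x; rw [hermiteFn_eq]; simp [PH]
    rw [FT]
    have hint : (fun x : ℝ => ((hermiteFn 0 x : ℝ) : ℂ) * Complex.exp (-(Complex.I * ξ * x)))
        = fun x : ℝ => (cst 0 : ℂ) * (Complex.exp (Complex.I * (-ξ : ℂ) * x)
            * Complex.exp (-((1/2 : ℝ) : ℂ) * x ^ 2)) := by
      funext x
      rw [h0 x, Complex.ofReal_mul, Complex.ofReal_exp, mul_assoc, ← Complex.exp_add,
        ← Complex.exp_add]
      refine congrArg (fun z => ((cst 0 : ℝ) : ℂ) * z) (congrArg Complex.exp ?_)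
      push_cast
      ring
    rw [hint, MeasureTheory.integral_const_mul,
      fourierIntegral_gaussian (by norm_num : (0:ℝ) < (((1/2 : ℝ) : ℂ)).re) (-ξ : ℂ)]
    have hc : ((Real.pi : ℂ) / ((1/2 : ℝ) : ℂ)) ^ (1/2 : ℂ)
        = ((((2*Real.pi) ^ ((1:ℝ)/2) : ℝ)) : ℂ) := by
      rw [show ((Real.pi : ℂ) / ((1/2:ℝ):ℂ)) = (((2*Real.pi : ℝ)) : ℂ) by push_cast; ring]
      rw [show (1/2 : ℂ) = (((1/2 : ℝ)) : ℂ) by norm_num,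
        ← Complex.ofReal_cpow (by positivity) (1/2 : ℝ)]
    have he : Complex.exp (-(-(ξ:ℂ))^2 / (4 * ((1/2:ℝ):ℂ))) = Complex.exp (-(ξ:ℂ)^2/2) := by
      congr 1
      push_cast
      ring
    rw [hc, he]
    rw [h0 ξ]
    have hkey : ((2*Real.pi) ^ (-(1:ℝ)/2) : ℝ) * ((2*Real.pi) ^ ((1:ℝ)/2) : ℝ) = 1 := by
      rw [← Real.rpow_add (by positivity)]
      norm_num
    have hkeyC : (((2*Real.pi) ^ (-(1:ℝ)/2) : ℝ) : ℂ) * (((2*Real.pi) ^ ((1:ℝ)/2) : ℝ) : ℂ) = 1 := by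
      rw [← Complex.ofReal_mul, hkey, Complex.ofReal_one]
    simp only [pow_zero, one_mul]
    push_cast
    linear_combination ((cst 0 : ℂ) * Complex.exp (-(ξ:ℂ)^2/2)) * hkeyC
  | succ n ih =>
    set s : ℝ := Real.sqrt (2 * ((n:ℝ) + 1)) with hs
    have hspos : 0 < s := Real.sqrt_pos.2 (by positivity)
    have hd : deriv (fun y : ℝ => (hermiteFn n y : ℂ))
        = fun x : ℝ => (((cst n * ((dPH n).eval x * Real.exp (-x ^ 2 / 2))) : ℝ) : ℂ) :=
      funext fun x => (hasDerivAt_hermiteC n x).deriv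
    have hFTd : FT (fun x : ℝ => (((cst n * ((dPH n).eval x * Real.exp (-x^2/2))) : ℝ) : ℂ)) ξ
        = Complex.I * ξ * ((-Complex.I)^n * (hermiteFn n ξ : ℂ)) := by
      have hint : Integrable (deriv (fun y : ℝ => (hermiteFn n y : ℂ))) := by
        rw [hd]; exact integrable_derivC n
      have h := FT_deriv (fun y : ℝ => (hermiteFn n y : ℂ)) (integrable_hermiteC n)
        (fun x => (hasDerivAt_hermiteC n x).differentiableAt) hint ξ
      rw [hd] at h
      rw [h, ih ξ]
    have hFTx : FT (fun x : ℝ => x • (hermiteFn n x : ℂ)) ξ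
        = Complex.I * ((-Complex.I)^n
            * (((cst n * ((dPH n).eval ξ * Real.exp (-ξ^2/2))) : ℝ) : ℂ)) := by
      have h1 := FT_hasDerivAt (fun x : ℝ => (hermiteFn n x : ℂ)) (integrable_hermiteC n)
        (integrable_smul_hermiteC n) ξ
      have h2 : HasDerivAt (fun y : ℝ => (-Complex.I)^n * (hermiteFn n y : ℂ))
          ((-Complex.I)^n * (((cst n * ((dPH n).eval ξ * Real.exp (-ξ^2/2))) : ℝ) : ℂ)) ξ :=
        (hasDerivAt_hermiteC n ξ).const_mul _
      have hFTfun : FT (fun x : ℝ => (hermiteFn n x : ℂ))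
          = fun y : ℝ => (-Complex.I)^n * (hermiteFn n y : ℂ) := funext fun y => ih y
      rw [hFTfun] at h1
      have huniq := h2.unique h1
      linear_combination (-Complex.I) * huniq
        + (FT (fun x : ℝ => x • (hermiteFn n x : ℂ)) ξ) * Complex.I_mul_I
    have hrec : ∀ x : ℝ, ((hermiteFn (n+1) x : ℝ) : ℂ)
        = ((s⁻¹ : ℝ) : ℂ) * ((x : ℂ) * (hermiteFn n x : ℂ)
            - (((cst n * ((dPH n).eval x * Real.exp (-x^2/2))) : ℝ) : ℂ)) := by
      intro x
      have hr := hermite_rec n x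
      have hx : hermiteFn (n+1) x
          = s⁻¹ * (x * hermiteFn n x - cst n * ((dPH n).eval x * Real.exp (-x^2/2))) := by
        rw [hr, inv_mul_cancel_left₀ hspos.ne']
      rw [hx]
      push_cast
      ring
    have heq : (fun x : ℝ => (hermiteFn (n+1) x : ℂ))
        = fun x : ℝ => ((s⁻¹ : ℝ) : ℂ) * ((fun x : ℝ => x • (hermiteFn n x : ℂ)) x
            - (fun x : ℝ => (((cst n * ((dPH n).eval x * Real.exp (-x^2/2))) : ℝ) : ℂ)) x) := by
      funext x
      simp only [Complex.real_smul]
      exact hrec x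
    rw [heq, FT_sub_smul s⁻¹ _ _ (integrable_smul_hermiteC n) (integrable_derivC n) ξ,
      hFTx, hFTd]
    rw [show ((hermiteFn (n+1) ξ : ℝ) : ℂ)
        = ((s⁻¹ : ℝ) : ℂ) * ((ξ : ℂ) * (hermiteFn n ξ : ℂ)
            - (((cst n * ((dPH n).eval ξ * Real.exp (-ξ^2/2))) : ℝ) : ℂ)) from hrec ξ]
    rw [pow_succ]
    push_cast
    ring
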